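/- arXiv:2311.09967 — 2 statements merged into one kernel-verified Lean document; each statement's English description precedes it below -/
import Mathlib

section
/- Fix k ≥ 1. Let (δ, λ, s0) and (δ', λ', s0) be Mealy machines over input set I, state set S, output set O. Suppose: (base case) for every input sequence x1,...,xk, running both machines from s0 yields identical outputs and identical states at every step 1,...,k; and (inductive case) for every state y ∈ S and every input sequence x1,...,x_{k+1}, if the two machines started at y agree on outputs and next-states for the first k steps when driven by δ's trajectory (i.e., λ' and δ' agree with λ and δ at each of the first k states of δ's run from y), then they also agree at step k+1. Then the machines are sequentially equivalent. -/
/-- State after feeding a list of inputs. -/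
def nextState {I S : Type} (δ : I → S → S) (s : S) (xs : List I) : S :=
  xs.foldl (fun s x => δ x s) s

/-- Output sequence of a Mealy machine on a list of inputs. -/
def outputs {I S O : Type} (δ : I → S → S) (lam : I → S → O) : S → List I → List O
  | _, [] => []
  | s, x :: xs => lam x s :: outputs δ lam (δ x s) xs

/-- A state is reachable from `s0` if some finite input sequence drives the machine to it. -/
def Reachable {I S : Type} (δ : I → S → S) (s0 s : S) : Prop :=
  ∃ xs : List I, nextState δ s0 xs = s

/-- Trajectory (run) of the transition function from `y` under the input stream `x`. -/
def traj {I S : Type} (δ : I → S → S) (x : ℕ → I) (y : S) : ℕ → S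
  | 0 => y
  | i + 1 => δ (x i) (traj δ x y i)

lemma traj_shift {I S : Type} (δ : I → S → S) (x : ℕ → I) (y : S) (m : ℕ) :
    ∀ i, traj δ (fun j => x (m + j)) (traj δ x y m) i = traj δ x y (m + i)
  | 0 => rfl
  | i + 1 => by
    show δ (x (m + i)) (traj δ (fun j => x (m + j)) (traj δ x y m) i) = traj δ x y (m + (i + 1))
    rw [traj_shift δ x y m i, Nat.add_succ]
    rfl

theorem stmt_3 {I S O : Type} (k : ℕ) (hk : 1 ≤ k)
    (δ δ' : I → S → S) (lam lam' : I → S → O) (s0 : S)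
    (hbase : ∀ x : ℕ → I,
      (∀ i ≤ k, traj δ x s0 i = traj δ' x s0 i) ∧
      (∀ i < k, lam (x i) (traj δ x s0 i) = lam' (x i) (traj δ' x s0 i)))
    (hind : ∀ (y : S) (x : ℕ → I),
      (∀ i < k, δ' (x i) (traj δ x y i) = δ (x i) (traj δ x y i) ∧
        lam' (x i) (traj δ x y i) = lam (x i) (traj δ x y i)) →
      (δ' (x k) (traj δ x y k) = δ (x k) (traj δ x y k) ∧
        lam' (x k) (traj δ x y k) = lam (x k) (traj δ x y k))) :
    ∀ xs : List I, outputs δ lam s0 xs = outputs δ' lam' s0 xs := by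
  -- global claim: along δ's run from s0, δ' and lam' agree with δ and lam
  have claim : ∀ (x : ℕ → I) (n : ℕ),
      δ' (x n) (traj δ x s0 n) = δ (x n) (traj δ x s0 n) ∧
      lam' (x n) (traj δ x s0 n) = lam (x n) (traj δ x s0 n) := by
    intro x n
    induction n using Nat.strong_induction_on with
    | _ n ih =>
      rcases lt_or_ge n k with hn | hn
      · obtain ⟨h1, h2⟩ := hbase x
        constructor
        · calc δ' (x n) (traj δ x s0 n) = δ' (x n) (traj δ' x s0 n) := by
                rw [h1 n hn.le]
            _ = traj δ' x s0 (n + 1) := rfl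
            _ = traj δ x s0 (n + 1) := (h1 (n + 1) hn).symm
            _ = δ (x n) (traj δ x s0 n) := rfl
        · have h3 := h2 n hn
          rw [← h1 n hn.le] at h3
          exact h3.symm
      · set m := n - k with hm
        have hmk : m + k = n := Nat.sub_add_cancel hn
        have hshift := traj_shift δ x s0 m
        have := hind (traj δ x s0 m) (fun j => x (m + j)) ?_
        · rw [hshift k, hmk] at this
          exact this
        · intro i hi
          rw [hshift i]
          exact ih (m + i) (by omega)
  -- derive output equality for lists
  have main : ∀ (xs : List I) (x : ℕ → I) (j : ℕ),
      (∀ i (h : i < xs.length), x (j + i) = xs.get ⟨i, h⟩) →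
      outputs δ lam (traj δ x s0 j) xs = outputs δ' lam' (traj δ x s0 j) xs := by
    intro xs
    induction xs with
    | nil => intro x j _; rfl
    | cons a as ihl =>
      intro x j hx
      have ha : x j = a := by simpa using hx 0 (by simp)
      obtain ⟨hd, hl⟩ := claim x j
      have hstep : δ' a (traj δ x s0 j) = δ a (traj δ x s0 j) := by rw [← ha]; exact hd
      have hout : lam' a (traj δ x s0 j) = lam a (traj δ x s0 j) := by rw [← ha]; exact hl
      have hnext : δ a (traj δ x s0 j) = traj δ x s0 (j + 1) := by
        simp [traj, ha]
      have htail := ihl x (j + 1) (by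
        intro i h
        have := hx (i + 1) (by simpa using Nat.succ_lt_succ h)
        rw [show j + 1 + i = j + (i + 1) by omega]
        simpa using this)
      simp only [outputs, hout, hstep, hnext, htail]
  intro xs
  rcases xs with _ | ⟨a, as⟩
  · rfl
  · have := main (a :: as) (fun i => (a :: as).getD i a) 0 (by
      intro i h
      simp [List.getD, List.getElem?_eq_getElem h, List.get_eq_getElem])
    simpa [traj] using this
end

section
/- Fix k ≥ 1 and let δ : I × S → S with initial state s0. Suppose P : S → Prop satisfies: (base) P holds for all states reached within the first k steps from s0 (for every input sequence); and (step) for every y ∈ S and every input sequence x1,...,xk, if P holds at each of the k consecutive states of the run of δ from y on x1,...,xk, then P holds at the (k+1)-th state. Then P holds at every reachable state of δ from s0. -/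
lemma traj_add {I S : Type} (δ : I → S → S) (x : ℕ → I) (y : S) (m n : ℕ) :
    traj δ (fun j => x (m + j)) (traj δ x y m) n = traj δ x y (m + n) := by
  induction n with
  | zero => rfl
  | succ n ih => simp [traj, ih, Nat.add_succ]

theorem stmt_5 {I S : Type} (k : ℕ) (hk : 1 ≤ k) (δ : I → S → S) (s0 : S) (P : S → Prop)
    (hbase : ∀ (x : ℕ → I) (i : ℕ), i < k → P (traj δ x s0 i))
    (hstep : ∀ (y : S) (x : ℕ → I),
      (∀ i < k, P (traj δ x y i)) → P (traj δ x y k)) :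
    ∀ (x : ℕ → I) (i : ℕ), P (traj δ x s0 i) := by
  intro x i
  induction i using Nat.strong_induction_on with
  | _ i ih =>
    by_cases h : i < k
    · exact hbase x i h
    · push_neg at h
      have hm : i - k + k = i := Nat.sub_add_cancel h
      have := hstep (traj δ x s0 (i - k)) (fun j => x (i - k + j)) ?_
      · rwa [traj_add, hm] at this
      · intro j hj
        rw [traj_add]
        exact ih _ (by omega)
end
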